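/- T_\alpha is H\"older continuous with exponent 1/2 on the dyadic rationals: there exists a constant K (depending on \alpha) such that |T_\alpha(p) - T_\alpha(q)| \le K |p - q|^{1/2} for all dyadic rationals p, q \in [0,1]. -/

import Mathlib

open Finset

/-- `f2 x = -x log₂ x`, the summand of base-2 Shannon entropy. -/
noncomputable def f2 (x : ℝ) : ℝ := -x * Real.logb 2 x

/-- Binary entropy function `H(α)` (base 2). -/
noncomputable def binEnt (α : ℝ) : ℝ := f2 α + f2 (1 - α)

/-- Joint pmf of `(Xⁿ, Yⁿ)` where `Xⁿ` is i.i.d. Bernoulli(1/2) and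
`Yⁿ = Xⁿ ⊕ Zⁿ` with `Zⁿ` i.i.d. Bernoulli(α) (a memoryless BSC(α)). -/
noncomputable def jointP (n : ℕ) (α : ℝ) (x y : Fin n → Bool) : ℝ :=
  (1/2)^n * ∏ i, (if x i = y i then 1 - α else α)

/-- `Pr{b(Xⁿ) = u, Yⁿ = y}`. -/
noncomputable def pBY (n : ℕ) (α : ℝ) (b : (Fin n → Bool) → Bool) (u : Bool)
    (y : Fin n → Bool) : ℝ :=
  ∑ x : Fin n → Bool, if b x = u then jointP n α x y else 0

/-- `Pr{b(Xⁿ) = u}` for `Xⁿ` uniform on `{0,1}ⁿ`. -/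
noncomputable def pB (n : ℕ) (b : (Fin n → Bool) → Bool) (u : Bool) : ℝ :=
  ∑ x : Fin n → Bool, if b x = u then (1/2)^n else 0

/-- `H(b(Xⁿ))`, the entropy of the Boolean function's output. -/
noncomputable def HB (n : ℕ) (b : (Fin n → Bool) → Bool) : ℝ :=
  ∑ u : Bool, f2 (pB n b u)

/-- `Pr{b(Xⁿ) = 0 ∣ Yⁿ = y}` (note `Pr{Yⁿ = y} = 2⁻ⁿ` since `Yⁿ` is uniform;
`0` is encoded as `false`). -/
noncomputable def condP (n : ℕ) (α : ℝ) (b : (Fin n → Bool) → Bool)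
    (y : Fin n → Bool) : ℝ :=
  (2:ℝ)^n * pBY n α b false y

/-- The conditional entropy `H(b(Xⁿ) ∣ Yⁿ)`. -/
noncomputable def condHB (n : ℕ) (α : ℝ) (b : (Fin n → Bool) → Bool) : ℝ :=
  ∑ y : Fin n → Bool, (1/2)^n * ∑ u : Bool, f2 ((2:ℝ)^n * pBY n α b u y)

/-- The mutual information `I(b(Xⁿ); Yⁿ) = H(b(Xⁿ)) - H(b(Xⁿ) ∣ Yⁿ)`. -/
noncomputable def MI (n : ℕ) (α : ℝ) (b : (Fin n → Bool) → Bool) : ℝ :=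
  HB n b - condHB n α b

/-- The numeric value of `x ∈ {0,1}ⁿ` with the first coordinate most significant;
`x ≺_L x'` in the lexicographic order iff `vecVal x < vecVal x'`. -/
def vecVal {n : ℕ} (x : Fin n → Bool) : ℕ :=
  ∑ i : Fin n, if x i then 2 ^ (n - 1 - i.val) else 0

/-- The unique lex Boolean function on `n` inputs whose preimage of `0` (= `false`)
is the initial segment of size `k` of the lexicographic order on `{0,1}ⁿ`. -/
def lexFun (n k : ℕ) : (Fin n → Bool) → Bool := fun x => decide (k ≤ vecVal x)

/-- `T_α` at the dyadic rational `k/2ⁿ`: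
`T_α(k/2ⁿ) = E_{Yⁿ} f(Pr{b(Xⁿ)=0 ∣ Yⁿ})` where `b` is the lex function on `n`
inputs with `Pr{b(Xⁿ)=0} = k/2ⁿ`. -/
noncomputable def Tdy (α : ℝ) (n k : ℕ) : ℝ :=
  ∑ y : Fin n → Bool, (1/2)^n * f2 (condP n α (lexFun n k) y)

lemma log2_pos : (0:ℝ) < Real.log 2 := Real.log_pos one_lt_two

lemma f2_eq (x : ℝ) : f2 x = -(x * Real.log x) / Real.log 2 := by
  simp [f2, Real.logb]; ring

lemma f2_nonneg {x : ℝ} (h0 : 0 ≤ x) (h1 : x ≤ 1) : 0 ≤ f2 x := by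
  rw [f2_eq]
  apply div_nonneg _ log2_pos.le
  rcases eq_or_lt_of_le h0 with h | h
  · simp [← h]
  · nlinarith [Real.log_nonpos h0 h1]

lemma f2_subadd {a d : ℝ} (ha : 0 ≤ a) (hd : 0 ≤ d) : f2 (a + d) ≤ f2 a + f2 d := by
  rw [f2_eq, f2_eq, f2_eq, ← add_div, div_le_div_iff_of_pos_right log2_pos]
  have h1 : a * Real.log a ≤ a * Real.log (a + d) := by
    rcases eq_or_lt_of_le ha with h | h
    · simp [← h]
    · exact mul_le_mul_of_nonneg_left (Real.log_le_log h (by linarith)) ha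
  have h2 : d * Real.log d ≤ d * Real.log (a + d) := by
    rcases eq_or_lt_of_le hd with h | h
    · simp [← h]
    · exact mul_le_mul_of_nonneg_left (Real.log_le_log h (by linarith)) hd
  nlinarith [h1, h2]

lemma f2_lower {a d : ℝ} (ha : 0 ≤ a) (hd : 0 ≤ d) (h1 : a + d ≤ 1) :
    f2 a - f2 (a + d) ≤ d / Real.log 2 := by
  rw [f2_eq, f2_eq, div_sub_div_same, div_le_div_iff_of_pos_right log2_pos]
  have hlog : Real.log (a + d) ≤ 0 := by
    rcases eq_or_lt_of_le (by linarith : (0:ℝ) ≤ a + d) with h | h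
    · simp [← h]
    · exact Real.log_nonpos (by linarith) h1
  rcases eq_or_lt_of_le ha with h | h
  · have : a = 0 := h.symm ▸ rfl
    subst this
    simp only [zero_add, Real.log_zero, mul_zero, neg_zero, zero_sub] at *
    nlinarith
  · have hkey : Real.log (a + d) - Real.log a ≤ d / a := by
      have := Real.log_le_sub_one_of_pos (show (0:ℝ) < (a+d)/a by positivity)
      rw [Real.log_div (by linarith) (ne_of_gt h)] at this
      have : Real.log (a+d) - Real.log a ≤ (a+d)/a - 1 := this
      calc Real.log (a+d) - Real.log a ≤ (a+d)/a - 1 := this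
        _ = d / a := by field_simp; ring
    have h2 : a * (Real.log (a + d) - Real.log a) ≤ d := by
      calc a * (Real.log (a+d) - Real.log a) ≤ a * (d/a) := mul_le_mul_of_nonneg_left hkey ha
        _ = d := by field_simp
    nlinarith [mul_nonpos_of_nonneg_of_nonpos hd hlog]

lemma abs_f2_sub_f2 {a b : ℝ} (ha : 0 ≤ a) (hab : a ≤ b) (hb : b ≤ 1) :
    |f2 b - f2 a| ≤ f2 (b - a) + (b - a) / Real.log 2 := by
  have hd : 0 ≤ b - a := by linarith
  have hsa := f2_subadd ha hd
  have hlo := f2_lower ha hd (by linarith)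
  have h0 : 0 ≤ f2 (b - a) := f2_nonneg hd (by linarith)
  have h0' : 0 ≤ (b - a) / Real.log 2 := div_nonneg hd log2_pos.le
  have hab' : a + (b - a) = b := by ring
  rw [hab'] at hsa hlo
  have hfa : 0 ≤ f2 a := f2_nonneg ha (by linarith)
  rw [abs_sub_le_iff]
  constructor <;> nlinarith

lemma vecVal_snoc {n : ℕ} (x : Fin n → Bool) (a : Bool) :
    vecVal (Fin.snoc x a) = 2 * vecVal x + (if a then 1 else 0) := by
  unfold vecVal
  rw [Fin.sum_univ_castSucc]
  simp only [Fin.snoc_castSucc, Fin.snoc_last, Fin.val_last, Nat.add_sub_cancel,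
    Nat.sub_self, pow_zero]
  have h1 : (∑ i : Fin n, if x i then 2 ^ (n - (i.castSucc).val) else 0)
      = 2 * ∑ i : Fin n, if x i then 2 ^ (n - 1 - i.val) else 0 := by
    rw [Finset.mul_sum]
    apply Finset.sum_congr rfl
    intro i _
    have hi : i.val < n := i.isLt
    have h2 : n - (i.castSucc).val = (n - 1 - i.val) + 1 := by
      simp [Fin.coe_castSucc]; omega
    rw [h2, pow_succ]
    cases x i <;> simp [mul_comm]
  rw [h1]

lemma vecVal_lt {n : ℕ} (x : Fin n → Bool) : vecVal x < 2 ^ n := by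
  induction n with
  | zero => simp [vecVal]
  | succ n ih =>
    rw [← Fin.snoc_init_self x, vecVal_snoc]
    have := ih (Fin.init x)
    have h2 : (if x (Fin.last n) then 1 else 0) ≤ 1 := by
      cases x (Fin.last n) <;> simp
    rw [pow_succ]
    omega

lemma existsUnique_vecVal {n k : ℕ} (hk : k < 2 ^ n) :
    ∃! x : Fin n → Bool, vecVal x = k := by
  induction n generalizing k with
  | zero =>
    interval_cases k
    exact ⟨fun i => false, by simp [vecVal], fun y _ => funext fun i => i.elim0⟩
  | succ n ih =>
    obtain ⟨x, hx, hxu⟩ := ih (show k / 2 < 2 ^ n by omega)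
    refine ⟨Fin.snoc x (decide (k % 2 = 1)), ?_, ?_⟩
    · show vecVal _ = k
      rw [vecVal_snoc, hx]
      rcases Nat.mod_two_eq_zero_or_one k with h | h <;> simp [h] <;> omega
    · intro y hy
      have hy' : vecVal y = k := hy
      rw [← Fin.snoc_init_self y, vecVal_snoc] at hy'
      rcases hb : y (Fin.last n) with _ | _ <;> rw [hb] at hy' <;> simp at hy'
      · have h2 := hxu (Fin.init y) (by omega)
        rw [← Fin.snoc_init_self y, h2, hb]
        congr 1
        have hm : k % 2 = 0 := by omega
        simp [hm]
      · have h2 := hxu (Fin.init y) (by omega)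
        rw [← Fin.snoc_init_self y, h2, hb]
        congr 1
        have hm : k % 2 = 1 := by omega
        simp [hm]

variable {α : ℝ} {n k : ℕ}

lemma jointP_nonneg (hα0 : 0 < α) (hα1 : α < 1) (x y : Fin n → Bool) :
    0 ≤ jointP n α x y := by
  unfold jointP
  apply mul_nonneg (by positivity)
  apply Finset.prod_nonneg
  intro i _
  split <;> linarith

/-- key product-sum identity: summing jointP over one argument -/
lemma sum_x_jointP (hα : True) (y : Fin n → Bool) :
    ∑ x : Fin n → Bool, jointP n α x y = (1/2)^n := by
  unfold jointP
  rw [← Finset.mul_sum]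
  have h : ∑ x : Fin n → Bool, ∏ i, (if x i = y i then 1 - α else α)
      = ∏ i : Fin n, ∑ a : Bool, (if a = y i then 1 - α else α) := by
    rw [Finset.prod_univ_sum]
    rw [Fintype.piFinset_univ]
  rw [h]
  have h2 : ∀ i : Fin n, (∑ a : Bool, if a = y i then 1 - α else α) = 1 := by
    intro i
    cases hyi : y i <;> simp [Fintype.sum_bool, hyi] <;> ring
  rw [Finset.prod_congr rfl (fun i _ => h2 i), Finset.prod_const_one, mul_one]

lemma sum_y_jointP (x : Fin n → Bool) :
    ∑ y : Fin n → Bool, jointP n α x y = (1/2)^n := by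
  unfold jointP
  rw [← Finset.mul_sum]
  have h : ∑ y : Fin n → Bool, ∏ i, (if x i = y i then 1 - α else α)
      = ∏ i : Fin n, ∑ a : Bool, (if x i = a then 1 - α else α) := by
    rw [Finset.prod_univ_sum, Fintype.piFinset_univ]
  rw [h]
  have h2 : ∀ i : Fin n, (∑ a : Bool, if x i = a then 1 - α else α) = 1 := by
    intro i
    cases hxi : x i <;> simp [Fintype.sum_bool, hxi] <;> ring
  rw [Finset.prod_congr rfl (fun i _ => h2 i), Finset.prod_const_one, mul_one]

lemma pBY_nonneg (hα0 : 0 < α) (hα1 : α < 1) (b : (Fin n → Bool) → Bool) (u : Bool)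
    (y : Fin n → Bool) : 0 ≤ pBY n α b u y := by
  apply Finset.sum_nonneg
  intro x _
  split
  · exact jointP_nonneg hα0 hα1 x y
  · exact le_rfl

lemma pBY_le (hα0 : 0 < α) (hα1 : α < 1) (b : (Fin n → Bool) → Bool) (u : Bool)
    (y : Fin n → Bool) : pBY n α b u y ≤ (1/2)^n := by
  rw [← sum_x_jointP (α := α) trivial y]
  apply Finset.sum_le_sum
  intro x _
  split
  · exact le_rfl
  · exact jointP_nonneg hα0 hα1 x y

lemma condP_nonneg (hα0 : 0 < α) (hα1 : α < 1) (b : (Fin n → Bool) → Bool)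
    (y : Fin n → Bool) : 0 ≤ condP n α b y :=
  mul_nonneg (by positivity) (pBY_nonneg hα0 hα1 b false y)

lemma condP_le_one (hα0 : 0 < α) (hα1 : α < 1) (b : (Fin n → Bool) → Bool)
    (y : Fin n → Bool) : condP n α b y ≤ 1 := by
  unfold condP
  have := pBY_le hα0 hα1 b false y
  calc (2:ℝ)^n * pBY n α b false y ≤ (2:ℝ)^n * (1/2)^n := by
        apply mul_le_mul_of_nonneg_left this (by positivity)
    _ = 1 := by rw [← mul_pow]; norm_num

def snocEquiv (n : ℕ) : (Fin n → Bool) × Bool ≃ (Fin (n+1) → Bool) where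
  toFun p := Fin.snoc p.1 p.2
  invFun x := (Fin.init x, x (Fin.last n))
  left_inv p := by simp
  right_inv x := Fin.snoc_init_self x

lemma sum_snoc {M : Type*} [AddCommMonoid M] (n : ℕ) (g : (Fin (n+1) → Bool) → M) :
    ∑ z : Fin (n+1) → Bool, g z
      = ∑ x : Fin n → Bool, ∑ a : Bool, g (Fin.snoc x a) := by
  rw [← Equiv.sum_comp (snocEquiv n) g, Fintype.sum_prod_type]
  rfl

lemma jointP_snoc {n : ℕ} (α : ℝ) (x y : Fin n → Bool) (a b : Bool) :
    jointP (n+1) α (Fin.snoc x a) (Fin.snoc y b)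
      = (1/2) * (if a = b then 1 - α else α) * jointP n α x y := by
  unfold jointP
  rw [Fin.prod_univ_castSucc]
  simp only [Fin.snoc_castSucc, Fin.snoc_last]
  rw [pow_succ]
  ring

lemma lexFun_snoc {n k : ℕ} (x : Fin n → Bool) (a : Bool) :
    lexFun (n+1) (2*k) (Fin.snoc x a) = lexFun n k x := by
  unfold lexFun
  rw [vecVal_snoc]
  apply decide_eq_decide.mpr
  cases a <;> simp <;> omega

lemma condP_snoc {n k : ℕ} (α : ℝ) (y : Fin n → Bool) (b : Bool) :
    condP (n+1) α (lexFun (n+1) (2*k)) (Fin.snoc y b)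
      = condP n α (lexFun n k) y := by
  unfold condP pBY
  rw [sum_snoc n (fun x => if lexFun (n+1) (2*k) x = false then jointP (n+1) α x (Fin.snoc y b) else 0)]
  have h : ∀ x : Fin n → Bool,
      (∑ a : Bool, if lexFun (n+1) (2*k) (Fin.snoc x a) = false
          then jointP (n+1) α (Fin.snoc x a) (Fin.snoc y b) else 0)
      = (1/2) * (if lexFun n k x = false then jointP n α x y else 0) := by
    intro x
    simp only [lexFun_snoc, jointP_snoc]
    by_cases hx : lexFun n k x = false
    · rw [if_pos hx]
      simp only [hx, if_pos]
      rw [Fintype.sum_bool]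
      cases b <;> simp <;> ring
    · simp [hx]
  rw [Finset.sum_congr rfl (fun x _ => h x), ← Finset.mul_sum]
  rw [pow_succ]
  ring

lemma Tdy_double (α : ℝ) (n k : ℕ) : Tdy α (n+1) (2*k) = Tdy α n k := by
  unfold Tdy
  rw [sum_snoc n]
  have h : ∀ y : Fin n → Bool, ∀ b : Bool,
      condP (n+1) α (lexFun (n+1) (2*k)) (Fin.snoc y b) = condP n α (lexFun n k) y :=
    fun y b => condP_snoc α y b
  have h2 : ∀ y : Fin n → Bool,
      (∑ b : Bool, (1/2:ℝ)^(n+1) * f2 (condP (n+1) α (lexFun (n+1) (2*k)) (Fin.snoc y b)))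
      = (1/2)^n * f2 (condP n α (lexFun n k) y) := by
    intro y
    rw [Fintype.sum_bool, h y true, h y false, pow_succ]
    ring
  rw [Finset.sum_congr rfl (fun y _ => h2 y)]

lemma Tdy_lift (α : ℝ) (n m k : ℕ) : Tdy α (n + m) (k * 2^m) = Tdy α n k := by
  induction m with
  | zero => simp
  | succ m ih =>
    have : k * 2^(m+1) = 2 * (k * 2^m) := by ring
    rw [this, ← Nat.add_assoc, Tdy_double, ih]

lemma lexFun_eq_false_iff {n k : ℕ} (x : Fin n → Bool) :
    lexFun n k x = false ↔ vecVal x < k := by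
  unfold lexFun
  simp [Nat.not_le]

lemma pBY_succ {n k : ℕ} {α : ℝ} (x₀ : Fin n → Bool) (hx₀ : vecVal x₀ = k)
    (hu : ∀ x : Fin n → Bool, vecVal x = k → x = x₀) (y : Fin n → Bool) :
    pBY n α (lexFun n (k+1)) false y
      = pBY n α (lexFun n k) false y + jointP n α x₀ y := by
  unfold pBY
  have h : ∀ x : Fin n → Bool,
      (if lexFun n (k+1) x = false then jointP n α x y else 0)
      = (if lexFun n k x = false then jointP n α x y else 0)
        + (if x = x₀ then jointP n α x y else 0) := by
    intro x
    by_cases h1 : vecVal x < k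
    · rw [if_pos ((lexFun_eq_false_iff x).mpr (by omega)),
        if_pos ((lexFun_eq_false_iff x).mpr h1), if_neg, add_zero]
      intro hx
      rw [hx, hx₀] at h1
      omega
    · by_cases h2 : vecVal x = k
      · have hx := hu x h2
        rw [if_pos ((lexFun_eq_false_iff x).mpr (by omega)), if_neg, if_pos hx, zero_add]
        rw [lexFun_eq_false_iff]
        omega
      · rw [if_neg, if_neg, if_neg, add_zero]
        · intro hx
          rw [hx, hx₀] at h2
          exact h2 rfl
        · rw [lexFun_eq_false_iff]; omega
        · rw [lexFun_eq_false_iff]; omega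
  rw [Finset.sum_congr rfl (fun x _ => h x), Finset.sum_add_distrib]
  congr 1
  rw [Finset.sum_ite_eq' univ x₀ (fun x => jointP n α x y)]
  simp

lemma condP_succ {n k : ℕ} {α : ℝ} (x₀ : Fin n → Bool) (hx₀ : vecVal x₀ = k)
    (hu : ∀ x : Fin n → Bool, vecVal x = k → x = x₀) (y : Fin n → Bool) :
    condP n α (lexFun n (k+1)) y
      = condP n α (lexFun n k) y + (2:ℝ)^n * jointP n α x₀ y := by
  unfold condP
  rw [pBY_succ x₀ hx₀ hu y]
  ring

lemma delta_ge {n : ℕ} {α : ℝ} (hα0 : 0 < α) (hα2 : α < 1/2) (x y : Fin n → Bool) :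
    α ^ n ≤ (2:ℝ)^n * jointP n α x y := by
  unfold jointP
  have h : (2:ℝ)^n * ((1/2)^n * ∏ i, (if x i = y i then 1 - α else α))
      = ∏ i : Fin n, (if x i = y i then 1 - α else α) := by
    rw [← mul_assoc, ← mul_pow]
    norm_num
  rw [h]
  calc (α:ℝ)^n = ∏ _i : Fin n, α := by rw [Finset.prod_const]; simp
    _ ≤ ∏ i : Fin n, (if x i = y i then 1 - α else α) := by
        apply Finset.prod_le_prod
        · intro i _; exact hα0.le
        · intro i _; split <;> linarith

lemma f2_le_of_ge {n : ℕ} {α δ : ℝ} (hα0 : 0 < α) (hα1 : α < 1) (hδ : α ^ n ≤ δ) :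
    f2 δ ≤ δ * (n * (-Real.logb 2 α)) := by
  unfold f2
  have hδ0 : 0 < δ := lt_of_lt_of_le (by positivity) hδ
  have hlog : Real.logb 2 (α ^ n) ≤ Real.logb 2 δ :=
    Real.logb_le_logb_of_le one_lt_two (by positivity) hδ
  rw [Real.logb_pow] at hlog
  have : -Real.logb 2 δ ≤ n * (-Real.logb 2 α) := by
    push_cast at hlog ⊢
    linarith
  calc -δ * Real.logb 2 δ = δ * (-Real.logb 2 δ) := by ring
    _ ≤ δ * (n * (-Real.logb 2 α)) := mul_le_mul_of_nonneg_left this hδ0.le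

/-- step bound constant -/
noncomputable def stepC (α : ℝ) (n : ℕ) : ℝ :=
  (n * (-Real.logb 2 α) + 1 / Real.log 2) / 2 ^ n

lemma c1_pos {α : ℝ} (hα0 : 0 < α) (hα2 : α < 1/2) : 0 < -Real.logb 2 α := by
  have := Real.logb_neg one_lt_two hα0 (show α < 1 by linarith)
  linarith

lemma stepC_pos {α : ℝ} (hα0 : 0 < α) (hα2 : α < 1/2) (n : ℕ) : 0 < stepC α n := by
  unfold stepC
  have h1 := c1_pos hα0 hα2
  have h2 : (0:ℝ) < 1 / Real.log 2 := by positivity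
  positivity

lemma Tdy_adj {α : ℝ} (hα0 : 0 < α) (hα2 : α < 1/2) {n k : ℕ} (hk : k + 1 ≤ 2^n) :
    |Tdy α n (k+1) - Tdy α n k| ≤ stepC α n := by
  have hα1 : α < 1 := by linarith
  obtain ⟨x₀, hx₀, hu⟩ := existsUnique_vecVal (show k < 2^n by omega)
  set c1 := -Real.logb 2 α with hc1
  set c2 := (1:ℝ) / Real.log 2 with hc2
  unfold Tdy
  rw [← Finset.sum_sub_distrib]
  refine le_trans (Finset.abs_sum_le_sum_abs _ _) ?_
  have key : ∀ y : Fin n → Bool,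
      |(1/2:ℝ)^n * f2 (condP n α (lexFun n (k+1)) y)
        - (1/2)^n * f2 (condP n α (lexFun n k) y)|
      ≤ (1/2)^n * (((2:ℝ)^n * jointP n α x₀ y) * (n * c1 + c2)) := by
    intro y
    set B := condP n α (lexFun n k) y with hB
    set δ := (2:ℝ)^n * jointP n α x₀ y with hδ
    have hA : condP n α (lexFun n (k+1)) y = B + δ := condP_succ x₀ hx₀ hu y
    have hB0 : 0 ≤ B := condP_nonneg hα0 hα1 _ y
    have hδ0 : 0 ≤ δ := by
      have := jointP_nonneg hα0 hα1 x₀ y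
      positivity
    have hA1 : B + δ ≤ 1 := by
      rw [← hA]; exact condP_le_one hα0 hα1 _ y
    have habs : |f2 (B + δ) - f2 B| ≤ f2 δ + δ / Real.log 2 := by
      have := abs_f2_sub_f2 hB0 (by linarith : B ≤ B + δ) hA1
      simpa using this
    have hδge : α ^ n ≤ δ := delta_ge hα0 hα2 x₀ y
    have hf2 : f2 δ ≤ δ * (n * c1) := f2_le_of_ge hα0 hα1 hδge
    rw [hA, ← mul_sub, abs_mul, abs_of_nonneg (by positivity : (0:ℝ) ≤ (1/2:ℝ)^n)]
    apply mul_le_mul_of_nonneg_left _ (by positivity : (0:ℝ) ≤ (1/2:ℝ)^n)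
    calc |f2 (B + δ) - f2 B| ≤ f2 δ + δ / Real.log 2 := habs
      _ ≤ δ * (n * c1) + δ * c2 := by
          have h3 : δ / Real.log 2 = δ * c2 := by rw [hc2]; ring
          rw [← h3]
          exact add_le_add hf2 le_rfl
      _ = δ * (n * c1 + c2) := by ring
  refine le_trans (Finset.sum_le_sum (fun y _ => key y)) ?_
  have hsum : ∑ y : Fin n → Bool, (1/2:ℝ)^n * (((2:ℝ)^n * jointP n α x₀ y) * (n * c1 + c2))
      = (1/2:ℝ)^n * ((2:ℝ)^n * ((∑ y : Fin n → Bool, jointP n α x₀ y) * (n * c1 + c2))) := by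
    rw [Finset.sum_mul, Finset.mul_sum, Finset.mul_sum]
    exact Finset.sum_congr rfl fun y _ => by ring
  rw [hsum, sum_y_jointP x₀]
  have h2 : ((2:ℝ)^n) ≠ 0 := by positivity
  have heq : (1/2:ℝ)^n * ((2:ℝ)^n * ((1/2:ℝ)^n * (↑n * c1 + c2))) = stepC α n := by
    unfold stepC
    rw [hc1, hc2]
    rw [div_pow, one_pow]
    field_simp
  rw [heq]

lemma Tdy_steps {α : ℝ} (hα0 : 0 < α) (hα2 : α < 1/2) {n : ℕ} :
    ∀ d k : ℕ, k + d ≤ 2^n → |Tdy α n (k + d) - Tdy α n k| ≤ d * stepC α n := by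
  intro d
  induction d with
  | zero => intro k _; simp
  | succ d ih =>
    intro k hk
    have h1 := ih k (by omega)
    have h2 := Tdy_adj hα0 hα2 (show (k + d) + 1 ≤ 2^n by omega)
    calc |Tdy α n (k + (d+1)) - Tdy α n k|
        ≤ |Tdy α n ((k+d)+1) - Tdy α n (k+d)| + |Tdy α n (k + d) - Tdy α n k| := by
          rw [show k + (d+1) = (k+d)+1 by ring]
          exact abs_sub_le _ _ _
      _ ≤ stepC α n + d * stepC α n := add_le_add h2 h1
      _ = ((d+1 : ℕ) : ℝ) * stepC α n := by push_cast; ring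
    
lemma Tdy_near {α : ℝ} (hα0 : 0 < α) (hα2 : α < 1/2) {n k k' : ℕ}
    (hk : k ≤ 2^n) (hk' : k' ≤ 2^n) (hnear : k' ≤ k + 1 ∧ k ≤ k' + 1) :
    |Tdy α n k - Tdy α n k'| ≤ stepC α n := by
  have hs := (stepC_pos hα0 hα2 n).le
  rcases Nat.le_total k k' with h | h
  · have h2 := Tdy_steps (n := n) hα0 hα2 (k' - k) k (by omega)
    rw [show k + (k' - k) = k' by omega] at h2
    rw [abs_sub_comm]
    calc |Tdy α n k' - Tdy α n k| ≤ ((k' - k : ℕ) : ℝ) * stepC α n := h2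
      _ ≤ 1 * stepC α n := by
          apply mul_le_mul_of_nonneg_right _ hs
          exact_mod_cast (show k' - k ≤ 1 by omega)
      _ = stepC α n := one_mul _
  · have h2 := Tdy_steps (n := n) hα0 hα2 (k - k') k' (by omega)
    rw [show k' + (k - k') = k by omega] at h2
    calc |Tdy α n k - Tdy α n k'| ≤ ((k - k' : ℕ) : ℝ) * stepC α n := h2
      _ ≤ 1 * stepC α n := by
          apply mul_le_mul_of_nonneg_right _ hs
          exact_mod_cast (show k - k' ≤ 1 by omega)
      _ = stepC α n := one_mul _

noncomputable def Bfun (α : ℝ) (m : ℕ) : ℝ :=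
  ((m + 2) * (-Real.logb 2 α) + 1 / Real.log 2) / 2 ^ m

lemma Bfun_pos {α : ℝ} (hα0 : 0 < α) (hα2 : α < 1/2) (m : ℕ) : 0 < Bfun α m := by
  unfold Bfun
  have h1 := c1_pos hα0 hα2
  have h2 : (0:ℝ) < 1 / Real.log 2 := by positivity
  positivity

lemma stepC_le_Bfun {α : ℝ} (hα0 : 0 < α) (hα2 : α < 1/2) (m : ℕ) :
    stepC α m ≤ Bfun α m := by
  unfold stepC Bfun
  have h1 := c1_pos hα0 hα2
  apply div_le_div_of_nonneg_right _ (by positivity)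
  nlinarith [h1]

lemma Bfun_step {α : ℝ} (n : ℕ) :
    stepC α (n+1) + Bfun α (n+1) = Bfun α n := by
  unfold stepC Bfun
  have h2 : ((2:ℝ)^(n+1)) = 2 * 2^n := by ring
  rw [h2]
  have h3 : ((2:ℝ)^n) ≠ 0 := by positivity
  field_simp
  push_cast
  ring

lemma Tdy_trunc {α : ℝ} (hα0 : 0 < α) (hα2 : α < 1/2) :
    ∀ n j k : ℕ, j ≤ n → k ≤ 2^n →
      |Tdy α n k - Tdy α j (k / 2^(n-j))| ≤ Bfun α j - Bfun α n := by
  intro n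
  induction n with
  | zero =>
    intro j k hj hk
    interval_cases j
    simp
  | succ n ih =>
    intro j k hj hk
    rcases Nat.eq_or_lt_of_le hj with h | h
    · subst h
      simp
    · have hjn : j ≤ n := by omega
      set k1 := k / 2 with hk1
      have hlift : Tdy α n k1 = Tdy α (n+1) (2*k1) := (Tdy_double α n k1).symm
      have hnear : |Tdy α (n+1) k - Tdy α (n+1) (2*k1)| ≤ stepC α (n+1) := by
        apply Tdy_near hα0 hα2 hk (by omega)
        omega
      have hih := ih j k1 hjn (by omega)
      have hdiv : k1 / 2^(n-j) = k / 2^(n+1-j) := by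
        rw [hk1, Nat.div_div_eq_div_mul]
        congr 1
        rw [← pow_succ']
        congr 1
        omega
      rw [hdiv] at hih
      calc |Tdy α (n+1) k - Tdy α j (k / 2^(n+1-j))|
          ≤ |Tdy α (n+1) k - Tdy α (n+1) (2*k1)|
            + |Tdy α (n+1) (2*k1) - Tdy α j (k / 2^(n+1-j))| := abs_sub_le _ _ _
        _ ≤ stepC α (n+1) + (Bfun α j - Bfun α n) := by
            refine add_le_add hnear ?_
            rw [← hlift]
            exact hih
        _ = Bfun α j - Bfun α (n+1) := by
            have := Bfun_step (α := α) n
            linarith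

lemma sq_nat_bound : ∀ j : ℕ, (j+2)^2 ≤ 8 * 2^j := by
  intro j
  induction j with
  | zero => norm_num
  | succ j ih =>
    have h2 : j < 2^j := Nat.lt_two_pow_self
    calc (j+1+2)^2 = (j+2)^2 + (2*j+5) := by ring
      _ ≤ 8*2^j + (2*j+5) := by omega
      _ ≤ 8*2^j + 8*2^j := by omega
      _ = 8 * 2^(j+1) := by ring

lemma Bfun_sqrt {α : ℝ} (hα0 : 0 < α) (hα2 : α < 1/2) (j : ℕ) :
    Bfun α j ≤ (Real.sqrt 8 * (-Real.logb 2 α) + 1/Real.log 2)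
        * Real.sqrt (1 / 2^j) := by
  have h1 : 0 < -Real.logb 2 α := c1_pos hα0 hα2
  have hl2 := log2_pos
  have hc2 : (0:ℝ) < 1/Real.log 2 := by positivity
  have hpow : (0:ℝ) < 2^j := by positivity
  have hs := Real.sqrt_nonneg ((2:ℝ)^j)
  have hss : Real.sqrt ((2:ℝ)^j) * Real.sqrt ((2:ℝ)^j) = 2^j :=
    Real.mul_self_sqrt hpow.le
  have hspos : (0:ℝ) < Real.sqrt ((2:ℝ)^j) := by nlinarith
  have hge1 : 1 ≤ Real.sqrt ((2:ℝ)^j) := by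
    have h12 : (1:ℝ) ≤ 2^j := one_le_pow₀ (by norm_num)
    nlinarith
  have hsq : ((j:ℝ)+2) ≤ Real.sqrt 8 * Real.sqrt ((2:ℝ)^j) := by
    rw [← Real.sqrt_mul (by norm_num : (0:ℝ) ≤ 8)]
    rw [show ((j:ℝ)+2) = Real.sqrt (((j:ℝ)+2)^2) by
      rw [Real.sqrt_sq (by positivity)]]
    apply Real.sqrt_le_sqrt
    have := sq_nat_bound j
    exact_mod_cast this
  have hkey : Real.sqrt (1/2^j) = 1 / Real.sqrt ((2:ℝ)^j) := by
    rw [one_div, one_div, Real.sqrt_inv]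
  rw [hkey]
  unfold Bfun
  rw [div_le_iff₀ hpow]
  have hrw : ((Real.sqrt 8 * (-Real.logb 2 α) + 1/Real.log 2) * (1/Real.sqrt ((2:ℝ)^j))) * 2^j
      = (Real.sqrt 8 * (-Real.logb 2 α) + 1/Real.log 2) * Real.sqrt ((2:ℝ)^j) := by
    field_simp
    linear_combination (Real.sqrt 8 * Real.logb 2 α * Real.log 2 - 1) * hss
  rw [hrw]
  nlinarith [mul_le_mul_of_nonneg_right hsq h1.le,
    le_mul_of_one_le_right hc2.le hge1]

/-- `T_α` is Hölder continuous with exponent `1/2` on the dyadic rationals: there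
is a constant `K` (depending on `α`) with `|T_α(p) - T_α(q)| ≤ K|p - q|^{1/2}`
for all dyadic rationals `p = k/2ⁿ`, `q = k'/2^{n'}` in `[0,1]`. -/
theorem T_holder (α : ℝ) (hα : α ∈ Set.Ioo (0:ℝ) (1/2)) :
    ∃ K : ℝ, ∀ n k n' k' : ℕ, k ≤ 2^n → k' ≤ 2^n' →
      |Tdy α n k - Tdy α n' k'| ≤
        K * |(k:ℝ)/2^n - (k':ℝ)/2^(n':ℕ)| ^ ((1:ℝ)/2) := by
  obtain ⟨hα0, hα2⟩ := hα
  set c1 := -Real.logb 2 α with hc1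
  set c2 := (1:ℝ)/Real.log 2 with hc2
  refine ⟨3 * Real.sqrt 2 * (Real.sqrt 8 * c1 + c2), ?_⟩
  intro n k n' k' hk hk'
  set N := max n n' with hN
  set a := k * 2^(N-n) with ha
  set b := k' * 2^(N-n') with hb
  have hTa : Tdy α n k = Tdy α N a := by
    have h := (Tdy_lift α n (N-n) k).symm
    rw [show n + (N - n) = N from by omega] at h
    rw [ha]
    exact h
  have hTb : Tdy α n' k' = Tdy α N b := by
    have h := (Tdy_lift α n' (N-n') k').symm
    rw [show n' + (N - n') = N from by omega] at h
    rw [hb]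
    exact h
  have ha2 : a ≤ 2^N := by
    calc a ≤ 2^n * 2^(N-n) := Nat.mul_le_mul_right _ hk
      _ = 2^N := by rw [← pow_add]; congr 1; omega
  have hb2 : b ≤ 2^N := by
    calc b ≤ 2^n' * 2^(N-n') := Nat.mul_le_mul_right _ hk'
      _ = 2^N := by rw [← pow_add]; congr 1; omega
  have hpa : (k:ℝ)/2^n = (a:ℝ)/2^N := by
    rw [div_eq_div_iff (by positivity) (by positivity), ha]
    push_cast
    rw [show (2:ℝ)^N = 2^n * 2^(N-n) from by rw [← pow_add]; congr 1; omega]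
    ring
  have hpb : (k':ℝ)/2^n' = (b:ℝ)/2^N := by
    rw [div_eq_div_iff (by positivity) (by positivity), hb]
    push_cast
    rw [show (2:ℝ)^N = 2^n' * 2^(N-n') from by rw [← pow_add]; congr 1; omega]
    ring
  set m := max a b - min a b with hm
  have habs : |(a:ℝ) - (b:ℝ)| = (m:ℝ) := by
    rcases Nat.le_total a b with h | h
    · rw [hm, max_eq_right h, min_eq_left h, abs_sub_comm,
        abs_of_nonneg (sub_nonneg.mpr ((Nat.cast_le (α := ℝ)).mpr h))]
      push_cast [h]
      ring
    · rw [hm, max_eq_left h, min_eq_right h,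
        abs_of_nonneg (sub_nonneg.mpr ((Nat.cast_le (α := ℝ)).mpr h))]
      push_cast [h]
      ring
  have hD : |(k:ℝ)/2^n - (k':ℝ)/2^n'| = (m:ℝ)/2^N := by
    rw [hpa, hpb, div_sub_div_same, abs_div, habs, abs_of_pos (by positivity : (0:ℝ) < 2^N)]
  rcases Nat.eq_zero_or_pos m with hm0 | hmpos
  · -- equal case
    have hab : a = b := by omega
    rw [hTa, hTb, hab, sub_self, abs_zero, hD, hm0]
    push_cast
    rw [zero_div, Real.zero_rpow (by norm_num), mul_zero]
  · -- main case
    have hmne : m ≠ 0 := by omega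
    set L := Nat.log 2 m + 1 with hL
    set j := N - L with hj
    have hjN : j ≤ N := Nat.sub_le _ _
    have hm2N : m ≤ 2^N := by omega
    have hmle : m ≤ 2^(N-j) ∧ 2^(N-j) ≤ 2*m := by
      by_cases hLN : L ≤ N
      · have hNj : N - j = L := by omega
        rw [hNj, hL]
        constructor
        · exact (Nat.lt_pow_succ_log_self one_lt_two m).le
        · rw [pow_succ]
          have := Nat.pow_log_le_self 2 hmne
          omega
      · have hNj : N - j = N := by omega
        rw [hNj]
        constructor
        · exact hm2N
        · have h1 : N ≤ Nat.log 2 m := by omega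
          have h2 : 2^N ≤ 2^(Nat.log 2 m) := Nat.pow_le_pow_right (by norm_num) h1
          have h3 := Nat.pow_log_le_self 2 hmne
          omega
    have hpowpos : 0 < 2^(N-j) := pow_pos (by norm_num) _
    set A := a / 2^(N-j) with hA
    set B := b / 2^(N-j) with hB
    have hA2 : A ≤ 2^j := by
      calc A ≤ 2^N / 2^(N-j) := Nat.div_le_div_right ha2
        _ = 2^j := by
            rw [Nat.pow_div (by omega) (by norm_num)]
            congr 1
            omega
    have hB2 : B ≤ 2^j := by
      calc B ≤ 2^N / 2^(N-j) := Nat.div_le_div_right hb2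
        _ = 2^j := by
            rw [Nat.pow_div (by omega) (by norm_num)]
            congr 1
            omega
    have hABnear : B ≤ A + 1 ∧ A ≤ B + 1 := by
      constructor
      · have h1 : b ≤ a + 2^(N-j) := by omega
        calc B ≤ (a + 2^(N-j)) / 2^(N-j) := Nat.div_le_div_right h1
          _ = A + 1 := by rw [Nat.add_div_right _ hpowpos]
      · have h1 : a ≤ b + 2^(N-j) := by omega
        calc A ≤ (b + 2^(N-j)) / 2^(N-j) := Nat.div_le_div_right h1
          _ = B + 1 := by rw [Nat.add_div_right _ hpowpos]
    have htr1 := Tdy_trunc hα0 hα2 N j a hjN ha2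
    have htr2 := Tdy_trunc hα0 hα2 N j b hjN hb2
    have hmid := Tdy_near hα0 hα2 hA2 hB2 hABnear
    have hBN := Bfun_pos hα0 hα2 N
    have hstep := stepC_le_Bfun hα0 hα2 j
    have htotal : |Tdy α N a - Tdy α N b| ≤ 3 * Bfun α j := by
      calc |Tdy α N a - Tdy α N b|
          ≤ |Tdy α N a - Tdy α j A| + |Tdy α j A - Tdy α j B|
            + |Tdy α j B - Tdy α N b| := by
              have h1 := abs_sub_le (Tdy α N a) (Tdy α j A) (Tdy α N b)
              have h2 := abs_sub_le (Tdy α j A) (Tdy α j B) (Tdy α N b)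
              linarith
        _ ≤ (Bfun α j - Bfun α N) + stepC α j + (Bfun α j - Bfun α N) := by
            have := htr2
            rw [abs_sub_comm] at this
            exact add_le_add (add_le_add htr1 hmid) this
        _ ≤ 3 * Bfun α j := by linarith
    -- analytic side
    set D := (m:ℝ)/2^N with hDd
    have hDpos : 0 < D := by
      rw [hDd]
      have : (0:ℝ) < (m:ℝ) := by exact_mod_cast hmpos
      positivity
    have hjD : (1:ℝ)/2^j ≤ 2*D := by
      have hcast : ((2:ℝ))^(N-j) ≤ 2*(m:ℝ) := by exact_mod_cast hmle.2
      have hsplit : (2:ℝ)^N = 2^j * 2^(N-j) := by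
        rw [← pow_add]
        congr 1
        omega
      have h2N : (0:ℝ) < 2^N := by positivity
      have h2j : (0:ℝ) < (2:ℝ)^j := by positivity
      have h2D : 2*D = (2*(m:ℝ))/2^N := by rw [hDd]; ring
      rw [h2D, div_le_div_iff₀ h2j h2N, one_mul, hsplit]
      nlinarith [hcast, h2j.le]
    have hsq2 : Real.sqrt (1/2^j) ≤ Real.sqrt 2 * Real.sqrt D := by
      rw [← Real.sqrt_mul (by norm_num : (0:ℝ) ≤ 2)]
      exact Real.sqrt_le_sqrt hjD
    have hcpos : (0:ℝ) < Real.sqrt 8 * c1 + c2 := by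
      have h1 := c1_pos hα0 hα2
      have h8 : (0:ℝ) < Real.sqrt 8 := Real.sqrt_pos.mpr (by norm_num)
      have hc2p : (0:ℝ) < c2 := by rw [hc2]; positivity
      rw [hc1] at *
      nlinarith
    have hfinal : 3 * Bfun α j ≤ 3 * Real.sqrt 2 * (Real.sqrt 8 * c1 + c2) * Real.sqrt D := by
      calc 3 * Bfun α j ≤ 3 * ((Real.sqrt 8 * c1 + c2) * Real.sqrt (1/2^j)) := by
            have := Bfun_sqrt hα0 hα2 j
            rw [← hc1, ← hc2] at this
            exact mul_le_mul_of_nonneg_left this (by norm_num)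
        _ ≤ 3 * ((Real.sqrt 8 * c1 + c2) * (Real.sqrt 2 * Real.sqrt D)) := by
            exact mul_le_mul_of_nonneg_left
              (mul_le_mul_of_nonneg_left hsq2 hcpos.le) (by norm_num)
        _ = 3 * Real.sqrt 2 * (Real.sqrt 8 * c1 + c2) * Real.sqrt D := by ring
    rw [hTa, hTb, hD]
    rw [show ((m:ℝ)/2^N) ^ ((1:ℝ)/2) = Real.sqrt D from by
      rw [hDd, Real.sqrt_eq_rpow]]
    exact le_trans htotal hfinal
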